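/- Let (X, P) be a probability space, let x₁, …, x_n ∈ X be fixed points, let K : X × X → ℝ be a function such that each section x ↦ K(x, x_i) belongs to L²(P), and let φ₁, …, φ_N be an orthonormal family in L²(P). Suppose that for every i ∈ {1, …, N} there exist coefficients α₁, …, α_n ∈ ℝ such that the function x ↦ Σ_{j=1}^n α_j K(x, x_j) satisfies ‖Σ_{j=1}^n α_j K(·, x_j) − φ_i‖²_{L²(P)} ≤ ε_i, where (1/N)·Σ_{i=1}^N ε_i ≤ ε. Then n ≥ (1 − ε) · N. -/

import Mathlib

open Finset MeasureTheory
open scoped RealInnerProductSpace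

set_option maxHeartbeats 1000000 in
/-- **Sample size lower bound for kernel methods (fixed points).**
Let `P` be a probability measure on `X`, let `x 1, …, x n ∈ X` be fixed points,
let `K : X × X → ℝ` be a kernel whose sections `x ↦ K x (xs j)` lie in `L²(P)`,
and let `φ 1, …, φ N` be an orthonormal family in `L²(P)`.  If for every `i`
some linear combination `x ↦ ∑ j, α j * K x (xs j)` approximates `φ i` within
squared `L²`-error `εi i`, where `(1/N) ∑ i, εi i ≤ ε`, then `n ≥ (1 - ε) N`. -/
theorem kernel_method_sample_lower_bound
    {X : Type*} [MeasurableSpace X] (P : Measure X) [IsProbabilityMeasure P]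
    (n N : ℕ) (xs : Fin n → X) (K : X → X → ℝ)
    (hK : ∀ j, MemLp (fun x => K x (xs j)) 2 P)
    (φ : Fin N → Lp ℝ 2 P) (hφ : Orthonormal ℝ φ)
    (εi : Fin N → ℝ) (ε : ℝ)
    (happrox : ∀ i, ∃ α : Fin n → ℝ,
      ‖(∑ j, α j • (hK j).toLp (fun x => K x (xs j))) - φ i‖ ^ 2 ≤ εi i)
    (hε : (1 / (N : ℝ)) * ∑ i, εi i ≤ ε) :
    (n : ℝ) ≥ (1 - ε) * (N : ℝ) := by
  classical
  rcases Nat.eq_zero_or_pos N with hN | hN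
  · subst hN; simp
  have hNpos : (0 : ℝ) < N := by exact_mod_cast hN
  set f : Fin n → Lp ℝ 2 P := fun j => (hK j).toLp (fun x => K x (xs j)) with hf
  set V : Submodule ℝ (Lp ℝ 2 P) := Submodule.span ℝ (Set.range f) with hV
  haveI : FiniteDimensional ℝ V := FiniteDimensional.span_of_finite ℝ (Set.finite_range f)
  haveI : CompleteSpace V := FiniteDimensional.complete ℝ V
  have hdim : Module.finrank ℝ V ≤ n := by
    simpa [Set.finrank] using finrank_range_le_card (R := ℝ) f
  set m := Module.finrank ℝ V with hm
  set b := stdOrthonormalBasis ℝ V with hb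
  set Q : Fin N → V := fun i => Submodule.orthogonalProjectionOnto V (φ i) with hQ
  -- lower bound on each projection
  have hlow : ∀ i, 1 - εi i ≤ ‖Q i‖ ^ 2 := by
    intro i
    obtain ⟨α, hα⟩ := happrox i
    have hα' : ‖(∑ j, α j • f j) - φ i‖ ^ 2 ≤ εi i := hα
    have hwV : (∑ j, α j • f j) ∈ V :=
      Submodule.sum_mem _ fun j _ => Submodule.smul_mem _ _ (Submodule.subset_span ⟨j, rfl⟩)
    have hmin : ‖φ i - ((Q i : V) : _)‖ ≤ ‖φ i - (∑ j, α j • f j)‖ := by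
      rw [hQ, ← Submodule.starProjection_apply, Submodule.starProjection_minimal]
      exact ciInf_le ⟨0, fun x ⟨y, hy⟩ => hy ▸ norm_nonneg _⟩ (⟨_, hwV⟩ : V)
    have hres : ‖φ i - ((Q i : V) : _)‖ ^ 2 ≤ εi i := by
      calc ‖φ i - ((Q i : V) : _)‖ ^ 2 ≤ ‖φ i - (∑ j, α j • f j)‖ ^ 2 :=
            pow_le_pow_left₀ (norm_nonneg _) hmin 2
        _ = ‖(∑ j, α j • f j) - φ i‖ ^ 2 := by rw [norm_sub_rev]
        _ ≤ εi i := hα'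
    have hpyth : ‖φ i‖ ^ 2 = ‖Q i‖ ^ 2 + ‖φ i - ((Q i : V) : _)‖ ^ 2 := by
      have h1 := Submodule.norm_sq_eq_add_norm_sq_projection (φ i) V
      have h2 : ‖Submodule.orthogonalProjectionOnto Vᗮ (φ i)‖ = ‖φ i - ((Q i : V) : _)‖ := by
        rw [Submodule.coe_norm, Submodule.orthogonalProjectionOnto_orthogonal]; rfl
      rw [h2] at h1; exact h1
    have hφ1 : ‖φ i‖ = 1 := hφ.1 i
    nlinarith [hres, hpyth]
  -- upper bound: sum of projection norms ≤ finrank ≤ n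
  have hQnorm : ∀ i, ‖Q i‖ ^ 2 = ∑ k, ⟪φ i, ((b k : V) : Lp ℝ 2 P)⟫ ^ 2 := by
    intro i
    have : ‖Q i‖ ^ 2 = ∑ k, ⟪b k, Q i⟫ ^ 2 := by
      rw [← real_inner_self_eq_norm_sq, ← b.sum_inner_mul_inner (Q i) (Q i)]
      refine Finset.sum_congr rfl fun k _ => ?_
      rw [real_inner_comm (Q i) (b k), sq]
    rw [this]
    refine Finset.sum_congr rfl fun k _ => ?_
    rw [hQ, Submodule.inner_orthogonalProjectionOnto_eq_of_mem_left, real_inner_comm]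
  have hupper : ∑ i, ‖Q i‖ ^ 2 ≤ (n : ℝ) := by
    calc ∑ i, ‖Q i‖ ^ 2 = ∑ k : Fin m, ∑ i, ⟪φ i, ((b k : V) : Lp ℝ 2 P)⟫ ^ 2 := by
          rw [← Finset.sum_comm]; exact Finset.sum_congr rfl fun i _ => hQnorm i
      _ ≤ ∑ k : Fin m, ‖((b k : V) : Lp ℝ 2 P)‖ ^ 2 := by
          refine Finset.sum_le_sum fun k _ => ?_
          have := hφ.sum_inner_products_le (s := Finset.univ) ((b k : V) : Lp ℝ 2 P)
          simpa [Real.norm_eq_abs, sq_abs] using this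
      _ = ∑ k : Fin m, (1 : ℝ) := by
          refine Finset.sum_congr rfl fun k _ => ?_
          have : ‖b k‖ = 1 := b.orthonormal.1 k
          rw [← Submodule.coe_norm, this, one_pow]
      _ = (m : ℝ) := by rw [Finset.sum_const, Finset.card_univ, Fintype.card_fin, nsmul_eq_mul, mul_one]
      _ ≤ (n : ℝ) := by exact_mod_cast hdim
  have hsum : (N : ℝ) - ∑ i, εi i ≤ ∑ i, ‖Q i‖ ^ 2 := by
    have := Finset.sum_le_sum (fun i (_ : i ∈ Finset.univ) => hlow i)
    simpa [Finset.sum_sub_distrib] using this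
  have hεN : ∑ i, εi i ≤ ε * N := by
    rw [one_div, inv_mul_le_iff₀ hNpos] at hε
    linarith
  nlinarith
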